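/- Let k be a field of characteristic p (p prime) and M an m×m matrix over k satisfying M^p = M. Then every coefficient of the characteristic polynomial det(t·I − M) lies in the prime field F_p, i.e., each coefficient a satisfies a^p = a. -/

import Mathlib

open Polynomial Matrix

theorem charpoly_coeff_in_Fp (p : ℕ) (hp : p.Prime) (k : Type*) [Field k] [CharP k p]
    (m : ℕ) (M : Matrix (Fin m) (Fin m) k) (hM : M ^ p = M) :
    ∀ i : ℕ, (Matrix.charpoly M).coeff i ^ p = (Matrix.charpoly M).coeff i := by
  haveI hfact : Fact p.Prime := ⟨hp⟩
  rcases Nat.eq_zero_or_pos m with rfl | hm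
  · intro i
    have : Matrix.charpoly M = 1 := by
      unfold Matrix.charpoly
      exact Matrix.det_isEmpty
    rw [this]
    rcases Nat.eq_zero_or_pos i with rfl | hi
    · simp
    · simp [Polynomial.coeff_one, hi.ne', zero_pow hp.ne_zero]
  haveI hnz : NeZero m := ⟨hm.ne'⟩
  -- Step 1: (charmatrix M) ^ p = expand p applied entrywise to charmatrix M
  have key : (Matrix.charpoly M) ^ p = Polynomial.expand k p (Matrix.charpoly M) := by
    have h1 : matPolyEquiv ((Polynomial.expand k p : k[X] →+* k[X]).mapMatrix
        (charmatrix (M ^ p))) = X ^ p - C (M ^ p) :=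
      matPolyEquiv_eq_X_pow_sub_C p M
    have h2 : matPolyEquiv ((charmatrix M) ^ p) = X ^ p - C (M ^ p) := by
      rw [map_pow, matPolyEquiv_charmatrix, sub_pow_char_of_commute (p := p) (h := (C M).commute_X),
        ← C_pow]
    have h3 : (charmatrix M) ^ p =
        (Polynomial.expand k p : k[X] →+* k[X]).mapMatrix (charmatrix M) := by
      apply matPolyEquiv.injective
      rw [h2, hM] at *
      rw [h1]
    unfold Matrix.charpoly
    rw [← det_pow, h3, ← RingHom.map_det]
    rfl
  -- Step 2: map frobenius both sides
  have h4 : (Matrix.charpoly M).map (frobenius k p) = Matrix.charpoly M := by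
    have h5 : ((Matrix.charpoly M).map (frobenius k p)) ^ p = (Matrix.charpoly M) ^ p := by
      rw [← Polynomial.map_pow, key, Polynomial.map_frobenius_expand]; exact key
    exact frobenius_inj k[X] p (by rw [frobenius_def, frobenius_def]; exact h5)
  intro i
  conv_rhs => rw [← h4]
  rw [Polynomial.coeff_map]
  rfl
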